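/- Let 1 ≤ m ≤ n be integers, p a prime, F : F_{p^n} → F_{p^m}, and c ∈ F_{p^m} with c ≠ 1. Then F is perfect₁ c-nonlinear if and only if F is c-differential bent₁. -/

import Mathlib

open Finset

noncomputable section

/-- Finite fields `GaloisField p n` are finite; fix a `Fintype` instance. -/
noncomputable instance (p n : ℕ) [Fact p.Prime] : Fintype (GaloisField p n) :=
  Fintype.ofFinite _

/-- `ζ_q = exp(2πi/q)`. -/
noncomputable def zetaC (q : ℕ) : ℂ := Complex.exp (2 * Real.pi * Complex.I / q)

/-- `ζ_p^t` for `t ∈ F_p`, computed via the integer lift of `t`. -/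
noncomputable def eChar (p : ℕ) (t : ZMod p) : ℂ := zetaC p ^ t.val

/-- The absolute trace `Tr_k : F_{p^k} → F_p`. -/
noncomputable def trAbs (p k : ℕ) [Fact p.Prime] (x : GaloisField p k) : ZMod p :=
  Algebra.trace (ZMod p) (GaloisField p k) x

/-- The Walsh transform `W_F(a,b) = ∑_x ζ_p^{Tr_m(b·F(x)) − Tr_n(a·x)}`. -/
noncomputable def Walsh (p n m : ℕ) [Fact p.Prime] (F : GaloisField p n → GaloisField p m)
    (a : GaloisField p n) (b : GaloisField p m) : ℂ :=
  ∑ x : GaloisField p n, eChar p (trAbs p m (b * F x) - trAbs p n (a * x))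

/-- The `c`-crosscorrelation `cC_{F,G}(u,b) = ∑_z ζ_p^{Tr_m(b(F(z+u) − c·G(z)))}`. -/
noncomputable def crossCorr (p n m : ℕ) [Fact p.Prime]
    (F G : GaloisField p n → GaloisField p m) (c : GaloisField p m)
    (u : GaloisField p n) (b : GaloisField p m) : ℂ :=
  ∑ x : GaloisField p n, eChar p (trAbs p m (b * (F (x + u) - c * G x)))

/-- The `c`-autocorrelation `cC_F = cC_{F,F}`. -/
noncomputable def autoCorr (p n m : ℕ) [Fact p.Prime]
    (F : GaloisField p n → GaloisField p m) (c : GaloisField p m)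
    (u : GaloisField p n) (b : GaloisField p m) : ℂ :=
  crossCorr p n m F F c u b

/-- `F` is perfect₁ `c`-nonlinear: `cC_F(u,b) = 0` for all `u ≠ 0`, `b ≠ 0`. -/
def PerfectCNonlinear1 (p n m : ℕ) [Fact p.Prime]
    (F : GaloisField p n → GaloisField p m) (c : GaloisField p m) : Prop :=
  ∀ u : GaloisField p n, u ≠ 0 → ∀ b : GaloisField p m, b ≠ 0 →
    autoCorr p n m F c u b = 0

/-- `F` is strictly perfect₁ `c`-nonlinear: `cC_F(u,b) = 0` for all `u`, all `b ≠ 0`. -/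
def StrictlyPerfectCNonlinear1 (p n m : ℕ) [Fact p.Prime]
    (F : GaloisField p n → GaloisField p m) (c : GaloisField p m) : Prop :=
  ∀ u : GaloisField p n, ∀ b : GaloisField p m, b ≠ 0 →
    autoCorr p n m F c u b = 0

/-- `F` is `c`-differential bent₁:
`W_F(x,b)·conj(W_F(x,bc)) = cC_F(0,b)` for all `x` and all `b ≠ 0`. -/
def CDifferentialBent1 (p n m : ℕ) [Fact p.Prime]
    (F : GaloisField p n → GaloisField p m) (c : GaloisField p m) : Prop :=
  ∀ x : GaloisField p n, ∀ b : GaloisField p m, b ≠ 0 →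
    Walsh p n m F x b * (starRingEnd ℂ) (Walsh p n m F x (b * c)) =
      autoCorr p n m F c 0 b

section Aux
variable (p : ℕ) [hp : Fact p.Prime]

lemma zetaC_pow_p : zetaC p ^ p = 1 := by
  have hp0 : (p : ℂ) ≠ 0 := Nat.cast_ne_zero.mpr hp.out.ne_zero
  rw [zetaC, ← Complex.exp_nat_mul,
    show (p : ℂ) * (2 * Real.pi * Complex.I / p) = 2 * Real.pi * Complex.I by field_simp]
  exact Complex.exp_two_pi_mul_I

lemma eChar_add (s t : ZMod p) : eChar p (s + t) = eChar p s * eChar p t := by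
  haveI : NeZero p := ⟨hp.out.ne_zero⟩
  rw [eChar, eChar, eChar, ← pow_add, ZMod.val_add, ← pow_eq_pow_mod _ (zetaC_pow_p p)]

lemma eChar_zero : eChar p 0 = 1 := by
  haveI : NeZero p := ⟨hp.out.ne_zero⟩
  rw [eChar, ZMod.val_zero, pow_zero]

lemma eChar_mul_neg (t : ZMod p) : eChar p t * eChar p (-t) = 1 := by
  rw [← eChar_add, add_neg_cancel, eChar_zero]

lemma zetaC_prim : IsPrimitiveRoot (zetaC p) p :=
  Complex.isPrimitiveRoot_exp p hp.out.ne_zero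

lemma abs_eChar (t : ZMod p) : ‖eChar p t‖ = 1 := by
  have h : ‖zetaC p‖ ^ p = 1 := by
    rw [← norm_pow, zetaC_pow_p, norm_one]
  have habs : ‖zetaC p‖ = 1 := by
    have : zetaC p = Complex.exp ((2 * Real.pi / p : ℝ) * Complex.I) := by
      rw [zetaC]; push_cast; ring_nf
    rw [this, Complex.norm_exp_ofReal_mul_I]
  rw [eChar, norm_pow, habs, one_pow]

lemma conj_eChar (t : ZMod p) : (starRingEnd ℂ) (eChar p t) = eChar p (-t) := by
  have h2 : (eChar p t)⁻¹ = eChar p (-t) := inv_eq_of_mul_eq_one_right (eChar_mul_neg p t)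
  rw [← h2, ← Complex.inv_eq_conj (abs_eChar p t)]

lemma eChar_ne_one {t : ZMod p} (ht : t ≠ 0) : eChar p t ≠ 1 := by
  haveI : NeZero p := ⟨hp.out.ne_zero⟩
  exact (zetaC_prim p).pow_ne_one_of_pos_of_lt
    (fun h => ht ((ZMod.val_eq_zero t).mp h)) (ZMod.val_lt t)

lemma trAbs_add (k : ℕ) (x y : GaloisField p k) :
    trAbs p k (x + y) = trAbs p k x + trAbs p k y :=
  map_add (Algebra.trace (ZMod p) (GaloisField p k)) x y

lemma trAbs_sub (k : ℕ) (x y : GaloisField p k) :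
    trAbs p k (x - y) = trAbs p k x - trAbs p k y :=
  map_sub (Algebra.trace (ZMod p) (GaloisField p k)) x y

lemma trAbs_zero (k : ℕ) : trAbs p k 0 = 0 :=
  map_zero (Algebra.trace (ZMod p) (GaloisField p k))

lemma sum_eChar_trAbs (k : ℕ) (w : GaloisField p k) (hw : w ≠ 0) :
    ∑ x : GaloisField p k, eChar p (trAbs p k (w * x)) = 0 := by
  obtain ⟨y, hy⟩ : ∃ y : GaloisField p k, trAbs p k y ≠ 0 := by
    by_contra h
    push_neg at h
    exact Algebra.trace_ne_zero (ZMod p) (GaloisField p k) (LinearMap.ext fun y => h y)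
  set x0 : GaloisField p k := w⁻¹ * y with hx0def
  have hwx0 : w * x0 = y := by rw [hx0def, ← mul_assoc, mul_inv_cancel₀ hw, one_mul]
  have hx0 : trAbs p k (w * x0) ≠ 0 := by rw [hwx0]; exact hy
  set S := ∑ x : GaloisField p k, eChar p (trAbs p k (w * x)) with hS
  have key : eChar p (trAbs p k (w * x0)) * S = S := by
    rw [hS, Finset.mul_sum]
    calc ∑ x : GaloisField p k, eChar p (trAbs p k (w * x0)) * eChar p (trAbs p k (w * x))
        = ∑ x : GaloisField p k, eChar p (trAbs p k (w * (x0 + x))) := by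
          refine Finset.sum_congr rfl fun x _ => ?_
          rw [← eChar_add, mul_add, trAbs_add]
      _ = S := Fintype.sum_equiv (Equiv.addLeft x0)
          (fun x => eChar p (trAbs p k (w * (x0 + x))))
          (fun x => eChar p (trAbs p k (w * x))) (fun x => rfl)
  have h0 : (eChar p (trAbs p k (w * x0)) - 1) * S = 0 := by
    rw [sub_mul, one_mul, key, sub_self]
  rcases mul_eq_zero.mp h0 with h | h
  · exact absurd (sub_eq_zero.mp h) (eChar_ne_one p hx0)
  · exact h

end Aux

lemma walsh_mul_conj (p n m : ℕ) [Fact p.Prime] (F : GaloisField p n → GaloisField p m)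
    (c : GaloisField p m) (a : GaloisField p n) (b : GaloisField p m) :
    Walsh p n m F a b * (starRingEnd ℂ) (Walsh p n m F a (b * c)) =
      ∑ u : GaloisField p n, autoCorr p n m F c u b * eChar p (- trAbs p n (a * u)) := by
  unfold Walsh autoCorr crossCorr
  rw [map_sum, Finset.sum_mul_sum]
  have lhs_eq : ∀ x y : GaloisField p n,
      eChar p (trAbs p m (b * F x) - trAbs p n (a * x)) *
        (starRingEnd ℂ) (eChar p (trAbs p m (b * c * F y) - trAbs p n (a * y))) =
      eChar p (trAbs p m (b * F x) - trAbs p m (b * c * F y)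
        - trAbs p n (a * x) + trAbs p n (a * y)) := by
    intro x y
    rw [conj_eChar, ← eChar_add]
    congr 1
    ring
  calc
    ∑ x : GaloisField p n, ∑ y : GaloisField p n,
        eChar p (trAbs p m (b * F x) - trAbs p n (a * x)) *
          (starRingEnd ℂ) (eChar p (trAbs p m (b * c * F y) - trAbs p n (a * y)))
      = ∑ x : GaloisField p n, ∑ y : GaloisField p n,
          eChar p (trAbs p m (b * F x) - trAbs p m (b * c * F y)
            - trAbs p n (a * x) + trAbs p n (a * y)) := by
        exact Finset.sum_congr rfl fun x _ => Finset.sum_congr rfl fun y _ => lhs_eq x y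
    _ = ∑ y : GaloisField p n, ∑ x : GaloisField p n,
          eChar p (trAbs p m (b * F x) - trAbs p m (b * c * F y)
            - trAbs p n (a * x) + trAbs p n (a * y)) := Finset.sum_comm
    _ = ∑ y : GaloisField p n, ∑ u : GaloisField p n,
          eChar p (trAbs p m (b * (F (y + u) - c * F y)) - trAbs p n (a * u)) := by
        refine Finset.sum_congr rfl fun y _ => ?_
        refine (Fintype.sum_equiv (Equiv.addLeft y)
          (fun u => eChar p (trAbs p m (b * (F (y + u) - c * F y)) - trAbs p n (a * u)))
          (fun x => eChar p (trAbs p m (b * F x) - trAbs p m (b * c * F y)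
            - trAbs p n (a * x) + trAbs p n (a * y))) (fun u => ?_)).symm
        show eChar p (trAbs p m (b * (F (y + u) - c * F y)) - trAbs p n (a * u)) =
          eChar p (trAbs p m (b * F (y + u)) - trAbs p m (b * c * F y)
            - trAbs p n (a * (y + u)) + trAbs p n (a * y))
        congr 1
        have h1 : b * (F (y + u) - c * F y) = b * F (y + u) - b * c * F y := by ring
        have h2 : a * u = a * (y + u) - a * y := by ring
        rw [h1, trAbs_sub, h2, trAbs_sub]
        ring
    _ = ∑ u : GaloisField p n, ∑ y : GaloisField p n,
          eChar p (trAbs p m (b * (F (y + u) - c * F y)) - trAbs p n (a * u)) := Finset.sum_comm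
    _ = ∑ u : GaloisField p n,
          (∑ y : GaloisField p n, eChar p (trAbs p m (b * (F (y + u) - c * F y)))) *
            eChar p (- trAbs p n (a * u)) := by
        refine Finset.sum_congr rfl fun u _ => ?_
        rw [Finset.sum_mul]
        refine Finset.sum_congr rfl fun y _ => ?_
        rw [← eChar_add]
        congr 1
        ring

theorem statement_1 (p n m : ℕ) [Fact p.Prime] (hm : 1 ≤ m) (hmn : m ≤ n)
    (F : GaloisField p n → GaloisField p m) (c : GaloisField p m) (hc : c ≠ 1) :
    PerfectCNonlinear1 p n m F c ↔ CDifferentialBent1 p n m F c := by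
  constructor
  · intro hP a b hb
    rw [walsh_mul_conj]
    rw [Fintype.sum_eq_single 0 (fun u hu => by rw [hP u hu b hb, zero_mul])]
    rw [mul_zero, trAbs_zero, neg_zero, eChar_zero, mul_one]
  · intro hB v hv b hb
    have hsum : ∀ a : GaloisField p n,
        ∑ u : GaloisField p n, autoCorr p n m F c u b * eChar p (- trAbs p n (a * u)) =
          autoCorr p n m F c 0 b := fun a => by
      rw [← walsh_mul_conj]; exact hB a b hb
    have key : ∑ a : GaloisField p n, eChar p (trAbs p n (v * a)) *
        (∑ u : GaloisField p n, autoCorr p n m F c u b * eChar p (- trAbs p n (a * u))) = 0 := by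
      calc ∑ a : GaloisField p n, eChar p (trAbs p n (v * a)) *
            (∑ u : GaloisField p n, autoCorr p n m F c u b * eChar p (- trAbs p n (a * u)))
          = ∑ a : GaloisField p n, eChar p (trAbs p n (v * a)) * autoCorr p n m F c 0 b :=
            Finset.sum_congr rfl fun a _ => by rw [hsum a]
        _ = (∑ a : GaloisField p n, eChar p (trAbs p n (v * a))) * autoCorr p n m F c 0 b :=
            (Finset.sum_mul _ _ _).symm
        _ = 0 := by rw [sum_eChar_trAbs p n v hv, zero_mul]
    have key2 : ∑ a : GaloisField p n, eChar p (trAbs p n (v * a)) *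
        (∑ u : GaloisField p n, autoCorr p n m F c u b * eChar p (- trAbs p n (a * u))) =
        autoCorr p n m F c v b * (Fintype.card (GaloisField p n) : ℂ) := by
      calc ∑ a : GaloisField p n, eChar p (trAbs p n (v * a)) *
            (∑ u : GaloisField p n, autoCorr p n m F c u b * eChar p (- trAbs p n (a * u)))
          = ∑ a : GaloisField p n, ∑ u : GaloisField p n,
              autoCorr p n m F c u b * eChar p (trAbs p n ((v - u) * a)) := by
            refine Finset.sum_congr rfl fun a _ => ?_
            rw [Finset.mul_sum]
            refine Finset.sum_congr rfl fun u _ => ?_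
            rw [mul_comm (eChar p (trAbs p n (v * a))), mul_assoc, ← eChar_add]
            congr 2
            have h1 : (v - u) * a = v * a - a * u := by ring
            rw [h1, trAbs_sub]
            ring
        _ = ∑ u : GaloisField p n, autoCorr p n m F c u b *
              ∑ a : GaloisField p n, eChar p (trAbs p n ((v - u) * a)) := by
            rw [Finset.sum_comm]
            exact Finset.sum_congr rfl fun u _ => (Finset.mul_sum _ _ _).symm
        _ = autoCorr p n m F c v b * (Fintype.card (GaloisField p n) : ℂ) := by
            rw [Fintype.sum_eq_single v (fun u hu => by
              rw [sum_eChar_trAbs p n (v - u) (sub_ne_zero.mpr (Ne.symm hu)), mul_zero])]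
            congr 1
            rw [sub_self]
            simp [trAbs_zero, eChar_zero]
    have hcard : (Fintype.card (GaloisField p n) : ℂ) ≠ 0 :=
      Nat.cast_ne_zero.mpr Fintype.card_ne_zero
    have := key2.symm.trans key
    rcases mul_eq_zero.mp this with h | h
    · exact h
    · exact absurd h hcard
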